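/- arXiv:1108.5492 — 3 statements merged into one kernel-verified Lean document; each statement's English description precedes it below -/
import Mathlib

section
/- For β = 1/2, the function p(z) = ∑_{k=0}^∞ z^k/Γ(1/2+k) satisfies p(z) = z^{1/2} e^z erf(√z) + 1/√π for all real z > 0, where erf(x) = (2/√π) ∫₀^x e^{-t²} dt. -/
open MeasureTheory intervalIntegral Real

lemma g_cont (k : ℕ) : Continuous fun u : ℝ => (1 - u^2)^k := by continuity

lemma g_succ (k : ℕ) : (∫ u in (0:ℝ)..1, (1-u^2)^(k+1)) =
    (2*(k:ℝ)+2)/(2*k+3) * ∫ u in (0:ℝ)..1, (1-u^2)^k := by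
  have key : ∫ u in (0:ℝ)..1, ((2*(k:ℝ)+3)*(1-u^2)^(k+1) - (2*k+2)*(1-u^2)^k) = 0 := by
    have : ∀ u ∈ Set.uIcc (0:ℝ) 1, HasDerivAt (fun u : ℝ => u * (1-u^2)^(k+1))
        ((2*(k:ℝ)+3)*(1-u^2)^(k+1) - (2*k+2)*(1-u^2)^k) u := by
      intro u _
      have hq : HasDerivAt (fun x : ℝ => 1 - x^2) (-(2*u^1)) u :=
        (hasDerivAt_pow 2 u).const_sub 1
      have hp := hq.pow (k+1)
      have : HasDerivAt (fun x : ℝ => x * (1-x^2)^(k+1)) (1 * (1-u^2)^(k+1) + u * (((k+1:ℕ):ℝ) * (1-u^2)^(k+1-1) * -(2*u^1))) u := (hasDerivAt_id u).mul hp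
      convert this using 1
      simp only [id, Nat.add_sub_cancel, pow_succ]
      push_cast
      ring
    have h := intervalIntegral.integral_eq_sub_of_hasDerivAt this (by
      apply Continuous.intervalIntegrable; continuity)
    simpa using h
  have hi1 : IntervalIntegrable (fun u : ℝ => (1-u^2)^(k+1)) volume 0 1 :=
    (g_cont (k+1)).intervalIntegrable _ _
  have hi2 : IntervalIntegrable (fun u : ℝ => (1-u^2)^k) volume 0 1 :=
    (g_cont k).intervalIntegrable _ _
  rw [intervalIntegral.integral_sub ((hi1.const_mul _)) ((hi2.const_mul _)),
    intervalIntegral.integral_const_mul, intervalIntegral.integral_const_mul] at key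
  have h3 : (2*(k:ℝ)+3) ≠ 0 := by positivity
  field_simp
  linarith [key]

lemma Gamma_g (k : ℕ) : Real.Gamma ((k:ℝ) + 3/2) * ∫ u in (0:ℝ)..1, (1-u^2)^k
    = Real.sqrt Real.pi / 2 * (k.factorial : ℝ) := by
  induction k with
  | zero =>
    have h32 : ((0:ℕ):ℝ) + 3/2 = 1/2 + 1 := by norm_num
    rw [h32, Real.Gamma_add_one (by norm_num), Real.Gamma_one_half_eq]
    simp
    ring
  | succ k ih =>
    have h1 : ((k+1:ℕ):ℝ) + 3/2 = ((k:ℝ) + 3/2) + 1 := by push_cast; ring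
    have h2 : ((k:ℝ) + 3/2) ≠ 0 := by positivity
    rw [h1, Real.Gamma_add_one h2, g_succ k]
    have h3 : ((k:ℝ)+3/2) * ((2*(k:ℝ)+2)/(2*(k:ℝ)+3)) = (k:ℝ)+1 := by
      field_simp
    calc ((k:ℝ) + 3/2) * Real.Gamma ((k:ℝ)+3/2) *
          ((2*(k:ℝ)+2)/(2*(k:ℝ)+3) * ∫ u in (0:ℝ)..1, (1-u^2)^k)
        = (((k:ℝ)+3/2) * ((2*(k:ℝ)+2)/(2*(k:ℝ)+3))) *
          (Real.Gamma ((k:ℝ)+3/2) * ∫ u in (0:ℝ)..1, (1-u^2)^k) := by ring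
      _ = ((k:ℝ)+1) * (Real.sqrt Real.pi / 2 * (k.factorial : ℝ)) := by rw [h3, ih]
      _ = Real.sqrt Real.pi / 2 * ((k+1).factorial : ℝ) := by
          rw [Nat.factorial_succ]; push_cast; ring

lemma g_nonneg (k : ℕ) : 0 ≤ ∫ u in (0:ℝ)..1, (1-u^2)^k := by
  apply intervalIntegral.integral_nonneg zero_le_one
  intro u hu
  have : u^2 ≤ 1 := by nlinarith [hu.1, hu.2]
  exact pow_nonneg (by linarith) k

lemma g_le_one (k : ℕ) : (∫ u in (0:ℝ)..1, (1-u^2)^k) ≤ 1 := by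
  have : (∫ u in (0:ℝ)..1, (1-u^2)^k) ≤ ∫ u in (0:ℝ)..1, (1:ℝ) := by
    apply intervalIntegral.integral_mono_on zero_le_one
      ((g_cont k).intervalIntegrable _ _) (intervalIntegrable_const)
    intro u hu
    have h1 : u^2 ≤ 1 := by nlinarith [hu.1, hu.2]
    have h2 : (0:ℝ) ≤ 1 - u^2 := by linarith
    calc (1-u^2)^k ≤ 1^k := pow_le_pow_left₀ h2 (by nlinarith [sq_nonneg u]) k
      _ = 1 := one_pow k
  simpa using this

theorem p_series_beta_half (z : ℝ) (hz : 0 < z) :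
    (∑' k : ℕ, z ^ k / Real.Gamma (1/2 + k)) =
      z ^ ((1:ℝ)/2) * Real.exp z *
        ((2 / Real.sqrt Real.pi) * ∫ t in (0:ℝ)..Real.sqrt z, Real.exp (-t ^ 2)) +
      1 / Real.sqrt Real.pi := by
  have hπ : (0:ℝ) < Real.sqrt Real.pi := Real.sqrt_pos.mpr Real.pi_pos
  set g : ℕ → ℝ := fun k => ∫ u in (0:ℝ)..1, (1-u^2)^k with hgdef
  have hΓpos : ∀ k : ℕ, 0 < Real.Gamma ((k:ℝ) + 3/2) := fun k =>
    Real.Gamma_pos_of_pos (by positivity)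
  -- terms of the shifted series
  have hterm : ∀ n : ℕ, z ^ (n+1) / Real.Gamma (1/2 + ((n+1:ℕ):ℝ)) =
      2 / Real.sqrt Real.pi * (z * (z^n / (n.factorial : ℝ) * g n)) := by
    intro n
    have hc : (1:ℝ)/2 + ((n+1:ℕ):ℝ) = (n:ℝ) + 3/2 := by push_cast; ring
    rw [hc]
    have h2 : Real.Gamma ((n:ℝ) + 3/2) * g n = Real.sqrt Real.pi / 2 * (n.factorial : ℝ) := by
      simp only [hgdef]; exact Gamma_g n
    have hΓ := hΓpos n
    have hf : (0:ℝ) < (n.factorial : ℝ) := by positivity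
    rw [div_eq_iff (ne_of_gt hΓ)]
    calc z ^ (n+1)
        = 2 / Real.sqrt Real.pi * (z^(n+1) / (n.factorial : ℝ)) *
          (Real.sqrt Real.pi / 2 * (n.factorial : ℝ)) := by field_simp
      _ = 2 / Real.sqrt Real.pi * (z^(n+1) / (n.factorial : ℝ)) *
          (Real.Gamma ((n:ℝ) + 3/2) * g n) := by rw [h2]
      _ = 2 / Real.sqrt Real.pi * (z * (z^n / (n.factorial : ℝ) * g n)) *
          Real.Gamma ((n:ℝ) + 3/2) := by ring
  -- summability of shifted series
  have hs1 : Summable (fun n : ℕ => z^n / (n.factorial : ℝ) * g n) := by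
    apply Summable.of_nonneg_of_le
      (fun n => by
        have := g_nonneg n
        have : (0:ℝ) ≤ g n := this
        positivity)
      (fun n => by
        have h1 := g_le_one n
        have h2 : (0:ℝ) < z^n / (n.factorial : ℝ) := by positivity
        calc z^n / (n.factorial : ℝ) * g n ≤ z^n / (n.factorial : ℝ) * 1 := by
              exact mul_le_mul_of_nonneg_left h1 h2.le
          _ = z^n / (n.factorial : ℝ) := by ring)
      (Real.summable_pow_div_factorial z)
  have hsa : Summable (fun k : ℕ => z ^ k / Real.Gamma (1/2 + k)) := by
    rw [← summable_nat_add_iff 1]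
    refine Summable.congr (hs1.mul_left (2 / Real.sqrt Real.pi * z)) fun n => ?_
    rw [hterm n]; ring
  -- series / integral interchange
  have hFcont : ∀ n : ℕ, Continuous (fun u : ℝ => z^n * (1-u^2)^n / (n.factorial : ℝ)) := by
    intro n
    exact ((continuous_const.mul (g_cont n)).div_const _)
  have hint : ∀ n : ℕ, MeasureTheory.IntegrableOn
      (fun u : ℝ => z^n * (1-u^2)^n / (n.factorial : ℝ)) (Set.Ioc (0:ℝ) 1) := fun n =>
    (hFcont n).integrableOn_Ioc
  have hintval : ∀ n : ℕ, (∫ u in Set.Ioc (0:ℝ) 1, z^n * (1-u^2)^n / (n.factorial : ℝ))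
      = z^n / (n.factorial : ℝ) * g n := by
    intro n
    rw [← intervalIntegral.integral_of_le zero_le_one]
    rw [hgdef]
    rw [← intervalIntegral.integral_const_mul]
    apply intervalIntegral.integral_congr
    intro u _
    simp only
    ring
  have hnorm : ∀ n : ℕ, ∀ u ∈ Set.Ioc (0:ℝ) 1,
      ‖z^n * (1-u^2)^n / (n.factorial : ℝ)‖ = z^n * (1-u^2)^n / (n.factorial : ℝ) := by
    intro n u hu
    have h1 : u^2 ≤ 1 := by nlinarith [hu.1, hu.2]
    have h2 : (0:ℝ) ≤ (1-u^2)^n := pow_nonneg (by linarith) n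
    have : (0:ℝ) ≤ z^n * (1-u^2)^n / (n.factorial : ℝ) := by positivity
    exact Real.norm_of_nonneg this
  have hsumnorm : Summable fun n : ℕ =>
      ∫ u in Set.Ioc (0:ℝ) 1, ‖z^n * (1-u^2)^n / (n.factorial : ℝ)‖ := by
    have heq : ∀ n : ℕ, (∫ u in Set.Ioc (0:ℝ) 1, ‖z^n * (1-u^2)^n / (n.factorial : ℝ)‖)
        = z^n / (n.factorial : ℝ) * g n := by
      intro n
      rw [MeasureTheory.setIntegral_congr_fun measurableSet_Ioc (hnorm n)]
      exact hintval n
    simp_rw [heq]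
    exact hs1
  have key : (∫ u in Set.Ioc (0:ℝ) 1, Real.exp (z*(1-u^2)))
      = ∑' n : ℕ, z^n / (n.factorial : ℝ) * g n := by
    have hpt : ∀ u : ℝ, Real.exp (z*(1-u^2)) = ∑' n : ℕ, z^n * (1-u^2)^n / (n.factorial : ℝ) := by
      intro u
      rw [Real.exp_eq_exp_ℝ, NormedSpace.exp_eq_tsum_div]
      simp_rw [mul_pow]
    simp_rw [hpt]
    rw [← MeasureTheory.integral_tsum_of_summable_integral_norm hint hsumnorm]
    simp_rw [hintval]
  -- substitution in the RHS integral
  have hsub : (∫ t in (0:ℝ)..Real.sqrt z, Real.exp (-t^2))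
      = Real.sqrt z * ∫ u in (0:ℝ)..1, Real.exp (-(z*u^2)) := by
    have h := intervalIntegral.smul_integral_comp_mul_left
      (fun t => Real.exp (-t^2)) (Real.sqrt z) (a := 0) (b := 1)
    simp only [mul_zero, mul_one, smul_eq_mul] at h
    rw [← h]
    congr 1
    apply intervalIntegral.integral_congr
    intro u _
    simp only
    rw [mul_pow, Real.sq_sqrt hz.le]
  -- put everything together
  rw [Summable.tsum_eq_zero_add hsa]
  have h0 : z ^ (0:ℕ) / Real.Gamma (1/2 + ((0:ℕ):ℝ)) = 1 / Real.sqrt Real.pi := by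
    norm_num [Real.Gamma_one_half_eq]
  rw [h0]
  have hrw : (∑' n : ℕ, z ^ (n+1) / Real.Gamma (1/2 + ((n+1:ℕ):ℝ)))
      = 2 / Real.sqrt Real.pi * z * ∑' n : ℕ, z^n / (n.factorial : ℝ) * g n := by
    rw [← hs1.tsum_mul_left]
    congr 1
    funext n
    rw [hterm n]
    ring
  push_cast at hrw ⊢
  have key' : (∫ u in (0:ℝ)..1, Real.exp (z*(1-u^2)))
      = ∑' n : ℕ, z^n / (n.factorial : ℝ) * g n := by
    rw [intervalIntegral.integral_of_le zero_le_one]; exact key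
  have hexp : (∫ u in (0:ℝ)..1, Real.exp (z*(1-u^2)))
      = Real.exp z * ∫ u in (0:ℝ)..1, Real.exp (-(z*u^2)) := by
    rw [← intervalIntegral.integral_const_mul]
    apply intervalIntegral.integral_congr
    intro u _
    simp only
    rw [← Real.exp_add]
    congr 1
    ring
  rw [hrw, ← key', hsub, ← Real.sqrt_eq_rpow, hexp]
  have hzz : Real.sqrt z * Real.sqrt z = z := Real.mul_self_sqrt hz.le
  set I := ∫ u in (0:ℝ)..1, Real.exp (-(z*u^2)) with hI
  linear_combination (-(2 / Real.sqrt Real.pi * Real.exp z * I)) * hzz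
end

section
/- Suppose α₁,…,α_{2N} are distinct nonzero complex numbers and ω₁,…,ω_{2N} complex numbers satisfying the canonical equations Γ(β+k) ∑_{j=1}^{2N} ω_j α_j^{-(β+k)} = -1 for k = 0,1,…,4N-1, where β > 0. Then for every g of the form g(s) = s^{-β} ∑_{k=0}^{4N-1} b_k s^{-k} and every v > 0, the inverse Laplace transform G(v) = v^{β-1} ∑_{k=0}^{4N-1} (b_k/Γ(β+k)) v^k satisfies G(v) = -(1/v) ∑_{j=1}^{2N} ω_j g(α_j/v). -/
open Finset

lemma aux_ofReal_mul_cpow (r : ℝ) (hr : 0 < r) (z : ℂ) (hz : z ≠ 0) (s : ℂ) :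
    ((r : ℂ) * z) ^ s = (r : ℂ) ^ s * z ^ s := by
  have hr' : (r : ℂ) ≠ 0 := by exact_mod_cast hr.ne'
  rw [Complex.cpow_def_of_ne_zero (mul_ne_zero hr' hz),
    Complex.cpow_def_of_ne_zero hr', Complex.cpow_def_of_ne_zero hz,
    Complex.log_ofReal_mul hr hz, Complex.ofReal_log hr.le, add_mul, Complex.exp_add]

theorem inverse_laplace_exact_from_canonical (β : ℝ) (hβ : 0 < β) (N : ℕ) (hN : 1 ≤ N)
    (α ω : Fin (2 * N) → ℂ)
    (hdist : Function.Injective α) (hne : ∀ j, α j ≠ 0)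
    (hcanon : ∀ k : ℕ, k < 4 * N →
      (Real.Gamma (β + k) : ℂ) * ∑ j, ω j * (α j) ^ (-((β : ℂ) + k)) = -1)
    (b : ℕ → ℝ) (v : ℝ) (hv : 0 < v) :
    ((v ^ (β - 1) * ∑ k ∈ Finset.range (4 * N), b k / Real.Gamma (β + k) * v ^ k : ℝ) : ℂ) =
      -(1 / (v : ℂ)) * ∑ j, ω j *
        (((α j) / v) ^ (-(β : ℂ)) *
          ∑ k ∈ Finset.range (4 * N), (b k : ℂ) * ((α j) / v) ^ (-(k : ℂ))) := by
  have hv' : (v : ℂ) ≠ 0 := by exact_mod_cast hv.ne'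
  have hαv : ∀ j, (α j / v) ≠ 0 := fun j => div_ne_zero (hne j) hv'
  -- rewrite each inner product as a single cpow and split off the real scaling
  have step : ∀ j, (α j / v) ^ (-(β : ℂ)) *
      ∑ k ∈ Finset.range (4 * N), (b k : ℂ) * ((α j) / v) ^ (-(k : ℂ))
      = ∑ k ∈ Finset.range (4 * N),
        (b k : ℂ) * ((v ^ (β + k) : ℝ) : ℂ) * (α j) ^ (-((β : ℂ) + k)) := by
    intro j
    rw [Finset.mul_sum]
    refine Finset.sum_congr rfl fun k _ => ?_
    have h1 : (α j / v) ^ (-(β : ℂ)) * (α j / v) ^ (-(k : ℂ))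
        = (α j / v) ^ (-((β : ℂ) + k)) := by
      rw [show -((β : ℂ) + k) = -(β : ℂ) + -(k : ℂ) by ring,
        Complex.cpow_add _ _ (hαv j)]
    have h2 : (α j / v) ^ (-((β : ℂ) + k))
        = ((v ^ (β + k) : ℝ) : ℂ) * (α j) ^ (-((β : ℂ) + k)) := by
      have hrw : α j / v = ((v⁻¹ : ℝ) : ℂ) * α j := by
        push_cast
        rw [div_eq_inv_mul]
      rw [hrw, aux_ofReal_mul_cpow _ (inv_pos.2 hv) _ (hne j)]
      congr 1
      rw [show -((β : ℂ) + k) = ((-(β + k) : ℝ) : ℂ) by push_cast; ring,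
        ← Complex.ofReal_cpow (inv_nonneg.2 hv.le),
        Real.inv_rpow hv.le, Real.rpow_neg hv.le, inv_inv]
    calc (α j / v) ^ (-(β : ℂ)) * ((b k : ℂ) * (α j / v) ^ (-(k : ℂ)))
        = (b k : ℂ) * ((α j / v) ^ (-(β : ℂ)) * (α j / v) ^ (-(k : ℂ))) := by ring
      _ = (b k : ℂ) * ((v ^ (β + k) : ℝ) : ℂ) * (α j) ^ (-((β : ℂ) + k)) := by
          rw [h1, h2]; ring
  have hR : ∑ j, ω j * ((α j / v) ^ (-(β : ℂ)) *
      ∑ k ∈ Finset.range (4 * N), (b k : ℂ) * ((α j) / v) ^ (-(k : ℂ)))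
      = ∑ j, ∑ k ∈ Finset.range (4 * N),
        ω j * ((b k : ℂ) * ((v ^ (β + k) : ℝ) : ℂ) * (α j) ^ (-((β : ℂ) + k))) := by
    refine Finset.sum_congr rfl fun j _ => ?_
    rw [step j, Finset.mul_sum]
  rw [hR, Finset.sum_comm, Finset.mul_sum]
  push_cast [Finset.mul_sum]
  refine Finset.sum_congr rfl fun k hk => ?_
  have hk' : k < 4 * N := Finset.mem_range.1 hk
  have hΓpos : 0 < Real.Gamma (β + k) :=
    Real.Gamma_pos_of_pos (by positivity)
  have hΓ : ((Real.Gamma (β + k) : ℝ) : ℂ) ≠ 0 := by exact_mod_cast hΓpos.ne'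
  have hsum : ∑ j, ω j * (α j) ^ (-((β : ℂ) + k))
      = -(((Real.Gamma (β + k) : ℝ) : ℂ))⁻¹ := by
    rw [show -(((Real.Gamma (β + k) : ℝ) : ℂ))⁻¹
        = (-1) / ((Real.Gamma (β + k) : ℝ) : ℂ) by ring, eq_div_iff hΓ]
    linear_combination hcanon k hk'
  have hjsum : ∑ j, -(1 / (v : ℂ)) *
        (ω j * ((b k : ℂ) * ((v ^ (β + k) : ℝ) : ℂ) * (α j) ^ (-((β : ℂ) + k))))
      = -(1 / (v : ℂ)) * ((b k : ℂ) * ((v ^ (β + k) : ℝ) : ℂ) *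
        (-(((Real.Gamma (β + k) : ℝ) : ℂ))⁻¹)) := by
    rw [← hsum]
    rw [Finset.mul_sum, Finset.mul_sum]
    refine Finset.sum_congr rfl fun j _ => ?_
    ring
  rw [hjsum]
  have hvpow : ((v ^ (β + k) : ℝ) : ℂ) = ((v ^ (β - 1) : ℝ) : ℂ) * (v : ℂ) ^ k * (v : ℂ) := by
    have : (v : ℝ) ^ (β + k) = v ^ (β - 1) * v ^ k * v := by
      rw [show β + (k : ℝ) = (β - 1) + ((k : ℝ) + 1) by ring,
        Real.rpow_add hv, Real.rpow_add hv, Real.rpow_natCast, Real.rpow_one]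
      ring
    rw [this]
    push_cast
    ring
  rw [hvpow]
  field_simp
end

section
/- Sifting-property limit: if f : [0,∞) → ℝ is continuous and bounded, then for every b > 0, lim_{β→0⁺} ∫₀^b f(v) · v^(β-1)/Γ(β) dv = f(0). -/
open MeasureTheory Real Filter Set

lemma rpow_intOn {β a c : ℝ} (hβ : 0 < β) (hac : a ≤ c) :
    IntegrableOn (fun v : ℝ => v ^ (β - 1)) (Set.Ioo a c) := by
  have := (intervalIntegral.intervalIntegrable_rpow' (a := a) (b := c)
    (show (-1:ℝ) < β - 1 by linarith))
  rw [intervalIntegrable_iff_integrableOn_Ioo_of_le hac] at this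
  exact this

lemma rpow_int {β a c : ℝ} (hβ : 0 < β) (hac : a ≤ c) :
    ∫ v in Set.Ioo a c, v ^ (β - 1) = (c ^ β - a ^ β) / β := by
  rw [← MeasureTheory.integral_Ioc_eq_integral_Ioo,
    ← intervalIntegral.integral_of_le hac,
    integral_rpow (Or.inl (show (-1:ℝ) < β - 1 by linarith))]
  norm_num

lemma key_bound (f : ℝ → ℝ) (hf : ContinuousOn f (Set.Ici 0)) (C : ℝ)
    (hbound : ∀ v : ℝ, 0 ≤ v → |f v| ≤ C) {b δ ε β : ℝ} (hb : 0 < b) (hδ : 0 < δ)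
    (hδb : δ < b) (hε : ∀ v : ℝ, 0 < v → v ≤ δ → |f v - f 0| ≤ ε) (hβ : 0 < β) :
    |(∫ v in Set.Ioo (0:ℝ) b, f v * (v ^ (β - 1) / Real.Gamma β)) - f 0| ≤
      ε * (δ ^ β / Real.Gamma (β + 1)) +
      (2 * C) * ((b ^ β - δ ^ β) / Real.Gamma (β + 1)) +
      |f 0| * |b ^ β / Real.Gamma (β + 1) - 1| := by
  have hΓ : 0 < Real.Gamma β := Real.Gamma_pos_of_pos hβ
  have hΓ1 : Real.Gamma (β + 1) = β * Real.Gamma β := Real.Gamma_add_one hβ.ne'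
  have hΓ1pos : 0 < Real.Gamma (β + 1) := by rw [hΓ1]; positivity
  set g : ℝ → ℝ := fun v => v ^ (β - 1) / Real.Gamma β with hgdef
  -- integral of g over Ioo a c for 0 ≤ a ≤ c
  have hgint : ∀ {a c : ℝ}, a ≤ c → ∫ v in Set.Ioo a c, g v = (c ^ β - a ^ β) / Real.Gamma (β + 1) := by
    intro a c hac
    rw [hgdef]
    rw [integral_div, rpow_int hβ hac, hΓ1]
    field_simp
  have hgInt : ∀ {a c : ℝ}, a ≤ c → IntegrableOn g (Set.Ioo a c) := by
    intro a c hac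
    exact (rpow_intOn hβ hac).div_const _
  -- measurability of f on subsets of Ici 0
  have hfm : ∀ {s : Set ℝ}, MeasurableSet s → s ⊆ Set.Ici 0 →
      AEStronglyMeasurable f (volume.restrict s) := by
    intro s hs hsub
    exact (hf.mono hsub).aestronglyMeasurable hs
  -- integrability of (f - f 0) * g on subsets
  have hmul : ∀ {a c : ℝ}, 0 ≤ a → a ≤ c →
      IntegrableOn (fun v => (f v - f 0) * g v) (Set.Ioo a c) := by
    intro a c ha hac
    apply (hgInt hac).bdd_mul (c := 2 * C)
      ((hfm measurableSet_Ioo (fun x hx => le_of_lt (lt_of_le_of_lt ha hx.1))).sub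
        aestronglyMeasurable_const)
    filter_upwards [ae_restrict_mem measurableSet_Ioo] with v hv
    have h0 : (0:ℝ) ≤ v := le_of_lt (lt_of_le_of_lt ha hv.1)
    calc ‖f v - f 0‖ ≤ |f v| + |f 0| := abs_sub _ _
      _ ≤ C + C := add_le_add (hbound v h0) (hbound 0 le_rfl)
      _ = 2 * C := by ring
  have hfg : IntegrableOn (fun v => f v * g v) (Set.Ioo (0:ℝ) b) := by
    apply (hgInt hb.le).bdd_mul (c := C) (hfm measurableSet_Ioo (fun x hx => hx.1.le))
    filter_upwards [ae_restrict_mem measurableSet_Ioo] with v hv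
    exact hbound v hv.1.le
  -- split
  have hC : 0 ≤ C := le_trans (abs_nonneg _) (hbound 0 le_rfl)
  have hunion : Set.Ioo (0:ℝ) b = Set.Ioo 0 δ ∪ Set.Ico δ b :=
    (Set.Ioo_union_Ico_eq_Ioo hδ hδb.le).symm
  have hsub1 : ∫ v in Set.Ioo (0:ℝ) b, (f v - f 0) * g v
      = (∫ v in Set.Ioo (0:ℝ) δ, (f v - f 0) * g v)
        + ∫ v in Set.Ioo δ b, (f v - f 0) * g v := by
    have hdisj : Disjoint (Set.Ioo (0:ℝ) δ) (Set.Ico δ b) := by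
      rw [Set.disjoint_left]; rintro x ⟨_, h2⟩ ⟨h3, _⟩; exact absurd h3 (not_le.2 h2)
    have hIco : IntegrableOn (fun v => (f v - f 0) * g v) (Set.Ico δ b) := by
      exact (hmul hδ.le hδb.le).congr_set_ae MeasureTheory.Ioo_ae_eq_Ico.symm
    rw [hunion, setIntegral_union hdisj measurableSet_Ico (hmul le_rfl hδ.le) hIco,
      MeasureTheory.integral_Ico_eq_integral_Ioo]
  have hsub2 : ∫ v in Set.Ioo (0:ℝ) b, (f v - f 0) * g v
      = (∫ v in Set.Ioo (0:ℝ) b, f v * g v) - f 0 * ((b ^ β - 0 ^ β) / Real.Gamma (β + 1)) := by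
    rw [← hgint hb.le, ← integral_const_mul, ← integral_sub hfg ((hgInt hb.le).const_mul _)]
    congr 1; ext v; ring
  -- bound each piece
  have hbd1 : |∫ v in Set.Ioo (0:ℝ) δ, (f v - f 0) * g v|
      ≤ ε * (δ ^ β / Real.Gamma (β + 1)) := by
    calc |∫ v in Set.Ioo (0:ℝ) δ, (f v - f 0) * g v|
        ≤ ∫ v in Set.Ioo (0:ℝ) δ, ε * g v := by
          rw [← Real.norm_eq_abs]
          apply MeasureTheory.norm_integral_le_of_norm_le ((hgInt hδ.le).const_mul _)
          filter_upwards [ae_restrict_mem measurableSet_Ioo] with v hv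
          have hgnn : 0 ≤ g v := div_nonneg (Real.rpow_nonneg hv.1.le _) hΓ.le
          rw [Real.norm_eq_abs, abs_mul, abs_of_nonneg hgnn]
          exact mul_le_mul_of_nonneg_right (hε v hv.1 hv.2.le) hgnn
      _ = ε * ∫ v in Set.Ioo (0:ℝ) δ, g v := integral_const_mul _ _
      _ = ε * ((δ ^ β - 0 ^ β) / Real.Gamma (β + 1)) := by rw [hgint hδ.le]
      _ = ε * (δ ^ β / Real.Gamma (β + 1)) := by rw [Real.zero_rpow hβ.ne']; ring
  have hbd2 : |∫ v in Set.Ioo δ b, (f v - f 0) * g v|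
      ≤ (2 * C) * ((b ^ β - δ ^ β) / Real.Gamma (β + 1)) := by
    calc |∫ v in Set.Ioo δ b, (f v - f 0) * g v|
        ≤ ∫ v in Set.Ioo δ b, (2 * C) * g v := by
          rw [← Real.norm_eq_abs]
          apply MeasureTheory.norm_integral_le_of_norm_le ((hgInt hδb.le).const_mul _)
          filter_upwards [ae_restrict_mem measurableSet_Ioo] with v hv
          have h0 : (0:ℝ) < v := lt_trans hδ hv.1
          have hgnn : 0 ≤ g v := div_nonneg (Real.rpow_nonneg h0.le _) hΓ.le
          rw [Real.norm_eq_abs, abs_mul, abs_of_nonneg hgnn]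
          refine mul_le_mul_of_nonneg_right ?_ hgnn
          calc |f v - f 0| ≤ |f v| + |f 0| := abs_sub _ _
            _ ≤ C + C := add_le_add (hbound v h0.le) (hbound 0 le_rfl)
            _ = 2 * C := by ring
      _ = (2 * C) * ∫ v in Set.Ioo δ b, g v := integral_const_mul _ _
      _ = _ := by rw [hgint hδb.le]
  -- assemble
  have key : (∫ v in Set.Ioo (0:ℝ) b, f v * g v) - f 0
      = (∫ v in Set.Ioo (0:ℝ) δ, (f v - f 0) * g v)
        + (∫ v in Set.Ioo δ b, (f v - f 0) * g v)
        + f 0 * (b ^ β / Real.Gamma (β + 1) - 1) := by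
    have := hsub2
    rw [hsub1] at this
    rw [Real.zero_rpow hβ.ne'] at this
    have h' : (∫ v in Set.Ioo (0:ℝ) b, f v * g v)
        = (∫ v in Set.Ioo (0:ℝ) δ, (f v - f 0) * g v)
          + (∫ v in Set.Ioo δ b, (f v - f 0) * g v)
          + f 0 * ((b ^ β - 0) / Real.Gamma (β + 1)) := by linarith
    rw [h']; ring
  calc |(∫ v in Set.Ioo (0:ℝ) b, f v * g v) - f 0|
      ≤ |∫ v in Set.Ioo (0:ℝ) δ, (f v - f 0) * g v|
        + |∫ v in Set.Ioo δ b, (f v - f 0) * g v|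
        + |f 0| * |b ^ β / Real.Gamma (β + 1) - 1| := by
        rw [key]
        calc _ ≤ |(∫ v in Set.Ioo (0:ℝ) δ, (f v - f 0) * g v)
            + (∫ v in Set.Ioo δ b, (f v - f 0) * g v)|
            + |f 0 * (b ^ β / Real.Gamma (β + 1) - 1)| := abs_add_le _ _
          _ ≤ _ := by rw [abs_mul]; exact add_le_add (abs_add_le _ _) le_rfl
    _ ≤ _ := by exact add_le_add (add_le_add hbd1 hbd2) le_rfl

theorem delta_sifting_limit (f : ℝ → ℝ) (hf : ContinuousOn f (Set.Ici 0))
    (C : ℝ) (hbound : ∀ v : ℝ, 0 ≤ v → |f v| ≤ C) (b : ℝ) (hb : 0 < b) :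
    Tendsto (fun β : ℝ => ∫ v in Set.Ioo (0:ℝ) b, f v * (v ^ (β - 1) / Real.Gamma β))
      (nhdsWithin 0 (Set.Ioi 0)) (nhds (f 0)) := by
  rw [Metric.tendsto_nhds]
  intro ε εpos
  -- continuity at 0 gives δ₀
  have hc : ContinuousWithinAt f (Set.Ici 0) 0 := hf 0 (Set.mem_Ici.2 le_rfl)
  rw [Metric.continuousWithinAt_iff] at hc
  obtain ⟨δ₀, hδ₀pos, hδ₀⟩ := hc (ε/4) (by positivity)
  set δ : ℝ := min (δ₀/2) (b/2) with hδdef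
  have hδpos : 0 < δ := lt_min (by positivity) (by positivity)
  have hδb : δ < b := lt_of_le_of_lt (min_le_right _ _) (by linarith)
  have hε' : ∀ v : ℝ, 0 < v → v ≤ δ → |f v - f 0| ≤ ε/4 := by
    intro v hv hvδ
    have : dist v 0 < δ₀ := by
      rw [Real.dist_eq, sub_zero, abs_of_pos hv]
      exact lt_of_le_of_lt hvδ (lt_of_le_of_lt (min_le_left _ _) (by linarith))
    have := hδ₀ (Set.mem_Ici.2 hv.le) this
    rw [Real.dist_eq] at this
    linarith
  -- limits of the bound
  have hδc : Tendsto (fun β : ℝ => δ ^ β) (nhds 0) (nhds 1) := by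
    have := (continuousAt_const_rpow (a := δ) (b := 0) hδpos.ne').tendsto
    simpa using this
  have hbc : Tendsto (fun β : ℝ => b ^ β) (nhds 0) (nhds 1) := by
    have := (continuousAt_const_rpow (a := b) (b := 0) hb.ne').tendsto
    simpa using this
  have hΓc : Tendsto (fun β : ℝ => Real.Gamma (β + 1)) (nhds 0) (nhds 1) := by
    have h1 : ContinuousAt Real.Gamma 1 := by
      refine (Real.differentiableAt_Gamma ?_).continuousAt
      intro m h
      have h0 : (0:ℝ) ≤ (m:ℝ) := Nat.cast_nonneg m
      linarith [h]
    have h2 : Tendsto (fun β : ℝ => β + 1) (nhds 0) (nhds 1) := by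
      simpa [Pi.add_def] using ((continuous_id.add continuous_const :
        Continuous fun β : ℝ => β + 1).tendsto 0)
    simpa [Real.Gamma_one, Function.comp_def] using h1.tendsto.comp h2
  have h1 : Tendsto (fun β : ℝ => δ ^ β / Real.Gamma (β + 1)) (nhds 0) (nhds 1) := by
    simpa [Pi.div_def] using hδc.div hΓc one_ne_zero
  have h2 : Tendsto (fun β : ℝ => (b ^ β - δ ^ β) / Real.Gamma (β + 1)) (nhds 0) (nhds 0) := by
    simpa [Pi.div_def] using (hbc.sub hδc).div hΓc one_ne_zero
  have h3 : Tendsto (fun β : ℝ => |b ^ β / Real.Gamma (β + 1) - 1|) (nhds 0) (nhds 0) := by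
    have := ((hbc.div hΓc one_ne_zero).sub (tendsto_const_nhds (x := (1:ℝ)))).abs
    simpa using this
  have hφ : Tendsto (fun β : ℝ => ε/4 * (δ ^ β / Real.Gamma (β + 1)) +
      (2 * C) * ((b ^ β - δ ^ β) / Real.Gamma (β + 1)) +
      |f 0| * |b ^ β / Real.Gamma (β + 1) - 1|) (nhds 0) (nhds (ε/4)) := by
    have := ((tendsto_const_nhds (x := ε/4)).mul h1).add
      (((tendsto_const_nhds (x := 2*C)).mul h2).add ((tendsto_const_nhds (x := |f 0|)).mul h3))
    simpa [mul_zero, add_zero, mul_one, add_assoc] using this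
  have hev : ∀ᶠ β in nhdsWithin (0:ℝ) (Set.Ioi 0), ε/4 * (δ ^ β / Real.Gamma (β + 1)) +
      (2 * C) * ((b ^ β - δ ^ β) / Real.Gamma (β + 1)) +
      |f 0| * |b ^ β / Real.Gamma (β + 1) - 1| < ε :=
    (hφ.mono_left nhdsWithin_le_nhds).eventually_lt_const (by linarith)
  filter_upwards [hev, self_mem_nhdsWithin] with β hβ1 hβ2
  rw [Real.dist_eq]
  exact lt_of_le_of_lt
    (key_bound f hf C hbound hb hδpos hδb hε' (Set.mem_Ioi.1 hβ2)) hβ1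
end
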